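/- Fix M ∈ ℕ, a carrier phase θ₀ ∈ ℝ, Saleh parameters α_i > 0, β_i > 0, α_{φ,i} ∈ ℝ, β_{φ,i} ≥ 0 for i = 1,…,M, vectors l_s, l_t ∈ ℝ^M with nonnegative entries, and constants ε ≥ 0, P ≥ 0. For r ∈ ℝ^M with r_i ≥ 0 and θ ∈ ℝ^M, define z_i(r_i, θ_i) = (α_i·r_i/(1 + β_i·r_i²))·exp(𝕚·(θ₀ + θ_i + α_{φ,i}·r_i²/(1 + β_{φ,i}·r_i²))) ∈ ℂ, and let S = { (r, θ) ∈ ℝ^M × ℝ^M : r_i ≥ 0 for all i, Σ_i r_i² ≤ P, and (Σ_i l_{t,i}·α_i·r_i/(1 + β_i·r_i²))² ≤ ε }. Then the supremum over S of the objective F(r,θ) = |Σ_{i=1}^M l_{s,i}·z_i(r_i, θ_i)| is attained at some point (r*, θ*) ∈ S satisfying both θ*_i = −θ₀ − α_{φ,i}·(r*_i)²/(1 + β_{φ,i}·(r*_i)²) for all i, and r*_i ≤ 1/√(β_i) for all i. -/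

import Mathlib

/-- The Saleh PA output for input signal `r·exp(𝕚(θ₀+θ))`:
`z(r,θ) = (α·r/(1+β·r²))·exp(𝕚(θ₀ + θ + α_φ·r²/(1+β_φ·r²)))`. -/
noncomputable def salehOut (α β αφ βφ θ₀ r θ : ℝ) : ℂ :=
  ((α * r / (1 + β * r ^ 2) : ℝ) : ℂ) *
    Complex.exp (Complex.I * ((θ₀ + θ + αφ * r ^ 2 / (1 + βφ * r ^ 2) : ℝ) : ℂ))

/-- Proposition 1: the beamforming objective
`F(r,θ) = |Σ l_s,i·z_i(r_i,θ_i)|` attains its supremum over the feasible set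
`S = {(r,θ) : r ≥ 0, Σ r_i² ≤ P, (Σ l_t,i·α_i·r_i/(1+β_i·r_i²))² ≤ ε}` at some
point whose phases are aligned (13) and whose amplitudes do not exceed the
saturation points `1/√β_i` (14). -/
theorem beamforming_optimum_aligned_below_saturation (M : ℕ) (θ₀ : ℝ)
    (α β αφ βφ ls lt : Fin M → ℝ)
    (hα : ∀ i, 0 < α i) (hβ : ∀ i, 0 < β i) (hβφ : ∀ i, 0 ≤ βφ i)
    (hls : ∀ i, 0 ≤ ls i) (hlt : ∀ i, 0 ≤ lt i)
    (ε P : ℝ) (hε : 0 ≤ ε) (hP : 0 ≤ P) :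
    ∃ r θ : Fin M → ℝ,
      ((∀ i, 0 ≤ r i) ∧ (∑ i, (r i) ^ 2) ≤ P ∧
        (∑ i, lt i * (α i * r i / (1 + β i * (r i) ^ 2))) ^ 2 ≤ ε) ∧
      (∀ r' θ' : Fin M → ℝ,
        ((∀ i, 0 ≤ r' i) ∧ (∑ i, (r' i) ^ 2) ≤ P ∧
          (∑ i, lt i * (α i * r' i / (1 + β i * (r' i) ^ 2))) ^ 2 ≤ ε) →
        ‖(∑ i, (↑(ls i) : ℂ) *
            salehOut (α i) (β i) (αφ i) (βφ i) θ₀ (r' i) (θ' i))‖ ≤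
          ‖(∑ i, (↑(ls i) : ℂ) *
            salehOut (α i) (β i) (αφ i) (βφ i) θ₀ (r i) (θ i))‖) ∧
      (∀ i, θ i = -θ₀ - αφ i * (r i) ^ 2 / (1 + βφ i * (r i) ^ 2)) ∧
      (∀ i, r i ≤ 1 / Real.sqrt (β i)) := by
  classical
  have hden : ∀ (i : Fin M) (x : ℝ), (0:ℝ) < 1 + β i * x ^ 2 := by
    intro i x
    have := mul_nonneg (hβ i).le (sq_nonneg x)
    linarith
  set K : Set (Fin M → ℝ) :=
    {r | (∀ i, 0 ≤ r i) ∧ (∑ i, (r i) ^ 2) ≤ P ∧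
      (∑ i, lt i * (α i * r i / (1 + β i * (r i) ^ 2))) ^ 2 ≤ ε} with hKdef
  set g : (Fin M → ℝ) → ℝ :=
    fun r => ∑ i, ls i * (α i * r i / (1 + β i * (r i) ^ 2)) with hgdef
  -- continuity helper
  have hcsum : ∀ c : Fin M → ℝ,
      Continuous (fun r : Fin M → ℝ => ∑ i, c i * (α i * r i / (1 + β i * (r i) ^ 2))) := by
    intro c
    apply continuous_finset_sum
    intro i _
    exact continuous_const.mul ((continuous_const.mul (continuous_apply i)).div
      (continuous_const.add (continuous_const.mul ((continuous_apply i).pow 2)))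
      (fun x => (hden i (x i)).ne'))
  have hg_cont : Continuous g := hcsum ls
  -- K is closed
  have hKclosed : IsClosed K := by
    have h1 : IsClosed {r : Fin M → ℝ | ∀ i, 0 ≤ r i} := by
      have : {r : Fin M → ℝ | ∀ i, 0 ≤ r i} = ⋂ i, {r | 0 ≤ r i} := by
        ext r; simp
      rw [this]
      exact isClosed_iInter fun i => isClosed_le continuous_const (continuous_apply i)
    have h2 : IsClosed {r : Fin M → ℝ | (∑ i, (r i) ^ 2) ≤ P} :=
      isClosed_le (continuous_finset_sum _ fun i _ => (continuous_apply i).pow 2)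
        continuous_const
    have h3 : IsClosed {r : Fin M → ℝ |
        (∑ i, lt i * (α i * r i / (1 + β i * (r i) ^ 2))) ^ 2 ≤ ε} :=
      isClosed_le ((hcsum lt).pow 2) continuous_const
    have : K = ({r : Fin M → ℝ | ∀ i, 0 ≤ r i} ∩ {r | (∑ i, (r i) ^ 2) ≤ P}) ∩
        {r | (∑ i, lt i * (α i * r i / (1 + β i * (r i) ^ 2))) ^ 2 ≤ ε} := by
      ext r
      simp only [hKdef, Set.mem_setOf_eq, Set.mem_inter_iff]
      tauto
    rw [this]
    exact (h1.inter h2).inter h3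
  -- K is compact
  have hKsub : K ⊆ Set.pi Set.univ (fun _ : Fin M => Set.Icc (-(Real.sqrt P)) (Real.sqrt P)) := by
    intro r hr
    obtain ⟨hr0, hrP, -⟩ := hr
    intro i _
    have h1 : (r i) ^ 2 ≤ P := by
      have h0 : (r i) ^ 2 ≤ ∑ j, (r j) ^ 2 :=
        Finset.single_le_sum (f := fun j => (r j) ^ 2)
          (fun j _ => sq_nonneg (r j)) (Finset.mem_univ i)
      exact le_trans h0 hrP
    have h2 : |r i| ≤ Real.sqrt P := by
      have := Real.sqrt_le_sqrt h1
      rwa [Real.sqrt_sq_eq_abs] at this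
    exact abs_le.mp h2
  have hKcompact : IsCompact K :=
    IsCompact.of_isClosed_subset (isCompact_univ_pi fun _ => isCompact_Icc) hKclosed hKsub
  have hKne : K.Nonempty := by
    refine ⟨fun _ => 0, ?_, ?_, ?_⟩
    · intro i; exact le_refl 0
    · simpa using hP
    · simpa using hε
  obtain ⟨r₀, hr₀K, hr₀max⟩ := hKcompact.exists_isMaxOn hKne hg_cont.continuousOn
  obtain ⟨hr₀0, hr₀P, hr₀ε⟩ := hr₀K
  -- reflected amplitudes
  set rs : Fin M → ℝ :=
    fun i => if r₀ i ≤ 1 / Real.sqrt (β i) then r₀ i else (β i * r₀ i)⁻¹ with hrsdef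
  have hsq : ∀ i, Real.sqrt (β i) ^ 2 = β i := fun i => Real.sq_sqrt (hβ i).le
  have hspos : ∀ i, 0 < Real.sqrt (β i) := fun i => Real.sqrt_pos.mpr (hβ i)
  have hrs_props : ∀ i, 0 ≤ rs i ∧ rs i ≤ r₀ i ∧ rs i ≤ 1 / Real.sqrt (β i) ∧
      α i * rs i / (1 + β i * (rs i) ^ 2) = α i * r₀ i / (1 + β i * (r₀ i) ^ 2) := by
    intro i
    by_cases h : r₀ i ≤ 1 / Real.sqrt (β i)
    · simp only [hrsdef, if_pos h]
      exact ⟨hr₀0 i, le_refl _, h, trivial⟩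
    · push_neg at h
      simp only [hrsdef, if_neg (not_le.mpr h)]
      have hs := hspos i
      have hrpos : 0 < r₀ i := lt_trans (by positivity) h
      have h1 : 1 < Real.sqrt (β i) * r₀ i := by
        rw [div_lt_iff₀ hs] at h
        linarith [h]
      have hbr : 0 < β i * r₀ i := mul_pos (hβ i) hrpos
      refine ⟨(inv_pos.mpr hbr).le, ?_, ?_, ?_⟩
      · rw [← one_div, div_le_iff₀ hbr]
        nlinarith [hsq i, h1, hs]
      · rw [← one_div, one_div, one_div]
        apply inv_anti₀ hs
        nlinarith [hsq i, h1, hs]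
      · have hb := (hβ i).ne'
        have hr := hrpos.ne'
        have hd1 := (hden i ((β i * r₀ i)⁻¹)).ne'
        have hd2 := (hden i (r₀ i)).ne'
        rw [div_eq_div_iff hd1 hd2]
        field_simp
        ring
  have hrs0 : ∀ i, 0 ≤ rs i := fun i => (hrs_props i).1
  have hrs_amp : ∀ i, α i * rs i / (1 + β i * (rs i) ^ 2)
      = α i * r₀ i / (1 + β i * (r₀ i) ^ 2) := fun i => (hrs_props i).2.2.2
  have hrsK : K rs := by
    refine ⟨hrs0, ?_, ?_⟩
    · calc (∑ i, (rs i) ^ 2) ≤ ∑ i, (r₀ i) ^ 2 :=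
            Finset.sum_le_sum fun i _ => pow_le_pow_left₀ (hrs0 i) (hrs_props i).2.1 2
        _ ≤ P := hr₀P
    · have : (∑ i, lt i * (α i * rs i / (1 + β i * (rs i) ^ 2)))
          = ∑ i, lt i * (α i * r₀ i / (1 + β i * (r₀ i) ^ 2)) :=
        Finset.sum_congr rfl fun i _ => by rw [hrs_amp i]
      rw [this]; exact hr₀ε
  have hg_eq : g rs = g r₀ := Finset.sum_congr rfl fun i _ => by rw [hrs_amp i]
  -- aligned phases
  set θs : Fin M → ℝ :=
    fun i => -θ₀ - αφ i * (rs i) ^ 2 / (1 + βφ i * (rs i) ^ 2) with hθsdef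
  -- value of objective at (rs, θs)
  have hz : ∀ i, salehOut (α i) (β i) (αφ i) (βφ i) θ₀ (rs i) (θs i)
      = ((α i * rs i / (1 + β i * (rs i) ^ 2) : ℝ) : ℂ) := by
    intro i
    unfold salehOut
    have h0 : (θ₀ + θs i + αφ i * (rs i) ^ 2 / (1 + βφ i * (rs i) ^ 2) : ℝ) = 0 := by
      simp only [hθsdef]; ring
    rw [h0]
    simp
  have hgnn : 0 ≤ g rs := by
    apply Finset.sum_nonneg
    intro i _
    exact mul_nonneg (hls i)
      (div_nonneg (mul_nonneg (hα i).le (hrs0 i)) (hden i (rs i)).le)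
  have hval : ‖(∑ i, (↑(ls i) : ℂ) *
      salehOut (α i) (β i) (αφ i) (βφ i) θ₀ (rs i) (θs i))‖ = g rs := by
    have : (∑ i, (↑(ls i) : ℂ) * salehOut (α i) (β i) (αφ i) (βφ i) θ₀ (rs i) (θs i))
        = ((g rs : ℝ) : ℂ) := by
      rw [hgdef, Complex.ofReal_sum]
      exact Finset.sum_congr rfl fun i _ => by rw [hz i, Complex.ofReal_mul]
    rw [this, Complex.norm_real, Real.norm_of_nonneg hgnn]
  refine ⟨rs, θs, hrsK, ?_, fun i => rfl, fun i => (hrs_props i).2.2.1⟩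
  intro r' θ' hr'
  have hr'K : K r' := hr'
  have hbound : ‖(∑ i, (↑(ls i) : ℂ) *
      salehOut (α i) (β i) (αφ i) (βφ i) θ₀ (r' i) (θ' i))‖ ≤ g r' := by
    calc ‖(∑ i, (↑(ls i) : ℂ) *
          salehOut (α i) (β i) (αφ i) (βφ i) θ₀ (r' i) (θ' i))‖
        ≤ ∑ i, ‖((↑(ls i) : ℂ) *
            salehOut (α i) (β i) (αφ i) (βφ i) θ₀ (r' i) (θ' i))‖ :=
          norm_sum_le _ _
      _ ≤ g r' := by
          apply Finset.sum_le_sum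
          intro i _
          rw [norm_mul, Complex.norm_real, Real.norm_of_nonneg (hls i)]
          apply mul_le_mul_of_nonneg_left _ (hls i)
          unfold salehOut
          rw [norm_mul, Complex.norm_real, mul_comm Complex.I,
            Complex.norm_exp_ofReal_mul_I, mul_one]
          rw [Real.norm_of_nonneg
            (div_nonneg (mul_nonneg (hα i).le (hr'.1 i)) (hden i (r' i)).le)]
  calc ‖(∑ i, (↑(ls i) : ℂ) *
        salehOut (α i) (β i) (αφ i) (βφ i) θ₀ (r' i) (θ' i))‖ ≤ g r' := hbound
    _ ≤ g r₀ := hr₀max hr'K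
    _ = g rs := hg_eq.symm
    _ = ‖(∑ i, (↑(ls i) : ℂ) *
        salehOut (α i) (β i) (αφ i) (βφ i) θ₀ (rs i) (θs i))‖ := hval.symm
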